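/- arXiv:2106.10985 — 4 statements merged into one kernel-verified Lean document; each statement's English description precedes it below -/
import Mathlib

section
/- Let H be a real Hilbert space, α ∈ (0,1), T > 0, and u ∈ C¹([0,T]; H). Then for every t ∈ (0,T), the Caputo derivative of t ↦ ‖u(t)‖²_H satisfies ½ ∂ₜ^α ‖u‖²_H (t) ≤ ⟨(∂ₜ^α u)(t), u(t)⟩_H, i.e. ½ ∫₀ᵗ g_{1−α}(t−s) · (d/ds)‖u(s)‖²_H ds ≤ ⟨∫₀ᵗ g_{1−α}(t−s) u′(s) ds, u(t)⟩_H. -/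
open MeasureTheory

open Set in
lemma aux_integrable {E : Type*} [NormedAddCommGroup E] [NormedSpace ℝ E]
    {w : ℝ → ℝ} {f : ℝ → E} {s : Set ℝ} (hs : MeasurableSet s)
    (hw : IntegrableOn w s) (hf : AEStronglyMeasurable f (volume.restrict s))
    {C : ℝ} (hC : ∀ x ∈ s, ‖f x‖ ≤ C) :
    IntegrableOn (fun x => w x • f x) s := by
  apply Integrable.mono' (hw.norm.const_mul C) (hw.1.smul hf)
  filter_upwards [ae_restrict_mem hs] with x hx
  rw [show (w • f) x = w x • f x from rfl, norm_smul]
  calc ‖w x‖ * ‖f x‖ ≤ ‖w x‖ * C :=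
        mul_le_mul_of_nonneg_left (hC x hx) (norm_nonneg _)
    _ = C * ‖w x‖ := mul_comm _ _

/-- Fractional chain inequality for the squared norm: for `u ∈ C¹([0,T];H)` and `t ∈ (0,T)`,
`½ ∂ₜ^α ‖u‖² (t) ≤ ⟨(∂ₜ^α u)(t), u(t)⟩`, where the Caputo derivative of order `α` is
`(∂ₜ^α u)(t) = ∫₀ᵗ g_{1-α}(t-s) u'(s) ds` with `g_β(t) = t^(β-1)/Γ(β)`. -/
theorem fractional_chain_sq {H : Type*} [NormedAddCommGroup H] [InnerProductSpace ℝ H]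
    [CompleteSpace H]
    (α T : ℝ) (hα : α ∈ Set.Ioo (0:ℝ) 1) (hT : 0 < T)
    (u u' : ℝ → H)
    (hu : ∀ t ∈ Set.Icc (0:ℝ) T, HasDerivAt u (u' t) t)
    (hu' : ContinuousOn u' (Set.Icc 0 T)) :
    ∀ t ∈ Set.Ioo (0:ℝ) T,
      (1/2) * ∫ s in Set.Ioo 0 t,
          ((t - s) ^ ((1 - α) - 1) / Real.Gamma (1 - α)) * deriv (fun r => ‖u r‖ ^ 2) s
        ≤ (inner ℝ (∫ s in Set.Ioo 0 t, ((t - s) ^ ((1 - α) - 1) / Real.Gamma (1 - α)) • u' s)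
            (u t) : ℝ) := by
  intro t ht
  obtain ⟨hα0, hα1⟩ := hα
  obtain ⟨ht0, htT⟩ := ht
  have hβ : (0:ℝ) < 1 - α := by linarith
  have hΓ : 0 < Real.Gamma (1 - α) := Real.Gamma_pos_of_pos hβ
  set w : ℝ → ℝ := fun s => (t - s) ^ ((1 - α) - 1) / Real.Gamma (1 - α) with hw_def
  have hwrw : ∀ s : ℝ, (t - s) ^ ((1 - α) - 1) / Real.Gamma (1 - α) = w s := fun s => rfl
  simp only [hwrw]
  -- basic facts
  have hu_cont : ContinuousOn u (Set.Icc 0 T) := fun x hx =>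
    (hu x hx).continuousAt.continuousWithinAt
  obtain ⟨M, hM⟩ := isCompact_Icc.exists_bound_of_continuousOn hu'
  have hM0 : 0 ≤ M := le_trans (norm_nonneg _) (hM 0 ⟨le_refl 0, hT.le⟩)
  have hsub : Set.Icc (0:ℝ) t ⊆ Set.Icc (0:ℝ) T := Set.Icc_subset_Icc le_rfl htT.le
  -- Lipschitz bound
  have hLip : ∀ s ∈ Set.Icc (0:ℝ) t, ‖u t - u s‖ ≤ M * (t - s) := by
    intro s hs
    have h1 : ∀ x ∈ Set.Icc s t, HasDerivWithinAt u (u' x) (Set.Icc s t) x := fun x hx =>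
      (hu x ⟨le_trans hs.1 hx.1, le_trans hx.2 htT.le⟩).hasDerivWithinAt
    exact norm_image_sub_le_of_norm_deriv_le_segment' h1
      (fun x hx => hM x ⟨le_trans hs.1 hx.1, le_trans hx.2.le htT.le⟩) t
      (Set.right_mem_Icc.2 hs.2)
  -- integrability of the weight
  have hw_ii : IntervalIntegrable w volume 0 t := by
    have h1 : IntervalIntegrable (fun s : ℝ => s ^ ((1 - α) - 1)) volume 0 t :=
      intervalIntegral.intervalIntegrable_rpow' (by linarith)
    have h2 := (h1.comp_sub_left t).symm
    simp only [sub_zero, sub_self] at h2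
    exact h2.div_const _
  have hw_int : IntegrableOn w (Set.Ioo 0 t) := by
    exact (integrableOn_Ioc_iff_integrableOn_Ioo).mp hw_ii.1
  have hw_nonneg : ∀ s : ℝ, s ≤ t → 0 ≤ w s := fun s hs =>
    div_nonneg (Real.rpow_nonneg (by linarith) _) hΓ.le
  -- measurability of u' on Ioo 0 t
  have hu'_meas : AEStronglyMeasurable u' (volume.restrict (Set.Ioo 0 t)) :=
    (hu'.mono (fun x hx => hsub (Set.Ioo_subset_Icc_self hx))).aestronglyMeasurable
      measurableSet_Ioo
  -- derivative of the squared norm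
  have hsq : ∀ s ∈ Set.Icc (0:ℝ) T,
      HasDerivAt (fun r => ‖u r‖ ^ 2) (2 * (inner ℝ (u' s) (u s) : ℝ)) s := by
    intro s hs
    have h1 := (hu s hs).inner ℝ (hu s hs)
    have h2 : (fun r => (inner ℝ (u r) (u r) : ℝ)) = fun r => ‖u r‖ ^ 2 := by
      funext r; exact real_inner_self_eq_norm_sq _
    rw [h2] at h1
    refine h1.congr_deriv ?_
    rw [real_inner_comm]; ring
  have hderiv_eq : ∀ s ∈ Set.Ioo (0:ℝ) t,
      deriv (fun r => ‖u r‖ ^ 2) s = 2 * (inner ℝ (u' s) (u s) : ℝ) := fun s hs =>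
    (hsq s ⟨hs.1.le, hs.2.le.trans htT.le⟩).deriv
  -- bound for u on Icc 0 t
  obtain ⟨N, hN⟩ := isCompact_Icc.exists_bound_of_continuousOn hu_cont
  -- integrabilities
  have h_int1 : IntegrableOn (fun s => w s * (inner ℝ (u' s) (u s) : ℝ)) (Set.Ioo 0 t) := by
    have := aux_integrable (E := ℝ) measurableSet_Ioo hw_int
      (f := fun s => (inner ℝ (u' s) (u s) : ℝ)) ?_ (C := M * N) ?_
    · simpa [smul_eq_mul] using this
    · exact ((hu'.mono (fun x hx => hsub (Set.Ioo_subset_Icc_self hx))).inner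
        (hu_cont.mono (fun x hx => hsub (Set.Ioo_subset_Icc_self hx)))).aestronglyMeasurable
        measurableSet_Ioo
    · intro x hx
      have hx' : x ∈ Set.Icc (0:ℝ) T := hsub (Set.Ioo_subset_Icc_self hx)
      calc ‖(inner ℝ (u' x) (u x) : ℝ)‖ ≤ ‖u' x‖ * ‖u x‖ := norm_inner_le_norm _ _
        _ ≤ M * N := mul_le_mul (hM x hx') ((norm_norm (u x)) ▸ hN x hx') (norm_nonneg _) hM0
  have h_int2 : IntegrableOn (fun s => w s * (inner ℝ (u' s) (u t) : ℝ)) (Set.Ioo 0 t) := by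
    have := aux_integrable (E := ℝ) measurableSet_Ioo hw_int
      (f := fun s => (inner ℝ (u' s) (u t) : ℝ)) ?_ (C := M * ‖u t‖) ?_
    · simpa [smul_eq_mul] using this
    · exact ((hu'.mono (fun x hx => hsub (Set.Ioo_subset_Icc_self hx))).inner
        continuousOn_const).aestronglyMeasurable measurableSet_Ioo
    · intro x hx
      have hx' : x ∈ Set.Icc (0:ℝ) T := hsub (Set.Ioo_subset_Icc_self hx)
      calc ‖(inner ℝ (u' x) (u t) : ℝ)‖ ≤ ‖u' x‖ * ‖u t‖ := norm_inner_le_norm _ _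
        _ ≤ M * ‖u t‖ := mul_le_mul_of_nonneg_right (hM x hx') (norm_nonneg _)
  have h_int3 : IntegrableOn (fun s => w s • u' s) (Set.Ioo 0 t) :=
    aux_integrable measurableSet_Ioo hw_int hu'_meas (C := M)
      (fun x hx => hM x (hsub (Set.Ioo_subset_Icc_self hx)))
  -- rewrite RHS
  have E2 : (inner ℝ (∫ s in Set.Ioo 0 t, w s • u' s) (u t) : ℝ)
      = ∫ s in Set.Ioo 0 t, w s * (inner ℝ (u' s) (u t) : ℝ) := by
    rw [real_inner_comm, ← integral_inner h_int3]
    refine integral_congr_ae (Filter.Eventually.of_forall fun s => ?_)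
    show (inner ℝ (u t) (w s • u' s) : ℝ) = w s * (inner ℝ (u' s) (u t) : ℝ)
    rw [real_inner_smul_right, real_inner_comm]
  -- rewrite LHS
  have E1 : (1/2 : ℝ) * ∫ s in Set.Ioo 0 t, w s * deriv (fun r => ‖u r‖ ^ 2) s
      = ∫ s in Set.Ioo 0 t, w s * (inner ℝ (u' s) (u s) : ℝ) := by
    have h1 : ∫ s in Set.Ioo 0 t, w s * deriv (fun r => ‖u r‖ ^ 2) s
        = ∫ s in Set.Ioo 0 t, 2 * (w s * (inner ℝ (u' s) (u s) : ℝ)) := by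
      refine setIntegral_congr_fun measurableSet_Ioo fun s hs => ?_
      rw [hderiv_eq s hs]; ring
    rw [h1, integral_const_mul]; ring
  rw [E1, E2]
  -- main inequality
  rw [← sub_nonneg, ← integral_sub h_int2 h_int1]
  have hkey : ∀ s ∈ Set.Ioo (0:ℝ) t,
      w s * (inner ℝ (u' s) (u t) : ℝ) - w s * (inner ℝ (u' s) (u s) : ℝ)
        = w s * (inner ℝ (u' s) (u t - u s) : ℝ) := by
    intro s hs
    rw [inner_sub_right]; ring
  rw [setIntegral_congr_fun measurableSet_Ioo hkey]
  -- now show 0 ≤ ∫ w s ⟪u' s, u t - u s⟫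
  set φ : ℝ → ℝ := fun s => ‖u t - u s‖ ^ 2 with hφ_def
  set φ' : ℝ → ℝ := fun s => -(2 * (inner ℝ (u' s) (u t - u s) : ℝ)) with hφ'_def
  have hφ_nonneg : ∀ s : ℝ, 0 ≤ φ s := fun s => pow_nonneg (norm_nonneg _) 2
  have hφd : ∀ s ∈ Set.Icc (0:ℝ) T, HasDerivAt φ (φ' s) s := by
    intro s hs
    have h1 : HasDerivAt (fun r => u t - u r) (-u' s) s := (hu s hs).const_sub (u t)
    have h2 := h1.inner ℝ h1
    have h3 : (fun r => (inner ℝ (u t - u r) (u t - u r) : ℝ)) = φ := by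
      funext r; exact real_inner_self_eq_norm_sq _
    rw [h3] at h2
    refine h2.congr_deriv ?_
    rw [hφ'_def]
    simp only [inner_neg_left, inner_neg_right]
    rw [real_inner_comm]; ring
  have hφ_cont : ContinuousOn φ (Set.Icc 0 T) :=
    ((continuousOn_const.sub hu_cont).norm).pow 2
  have hφ'_cont : ContinuousOn φ' (Set.Icc 0 T) :=
    ((continuousOn_const.mul (hu'.inner (continuousOn_const.sub hu_cont)))).neg
  have hφ'_bdd : ∀ s ∈ Set.Icc (0:ℝ) t, ‖φ' s‖ ≤ 2 * (M * (M * t)) := by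
    intro s hs
    have hs' : s ∈ Set.Icc (0:ℝ) T := hsub hs
    have h1 : ‖(inner ℝ (u' s) (u t - u s) : ℝ)‖ ≤ M * (M * t) := by
      calc ‖(inner ℝ (u' s) (u t - u s) : ℝ)‖ ≤ ‖u' s‖ * ‖u t - u s‖ := norm_inner_le_norm _ _
        _ ≤ M * (M * (t - s)) := by
            refine mul_le_mul (hM s hs') (hLip s hs) (norm_nonneg _) hM0
        _ ≤ M * (M * t) := by nlinarith [hs.1, mul_nonneg hM0 hM0]
    calc ‖φ' s‖ = 2 * ‖(inner ℝ (u' s) (u t - u s) : ℝ)‖ := by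
          simp only [hφ'_def]; rw [norm_neg, norm_mul]; norm_num
      _ ≤ 2 * (M * (M * t)) := by linarith
  -- interval integrability of w * φ'
  have hwφ'_int : IntegrableOn (fun s => w s * φ' s) (Set.Ioo 0 t) := by
    have := aux_integrable (E := ℝ) measurableSet_Ioo hw_int
      (f := φ') ((hφ'_cont.mono (fun x hx => hsub (Set.Ioo_subset_Icc_self hx))).aestronglyMeasurable
        measurableSet_Ioo) (C := 2 * (M * (M * t)))
      (fun x hx => hφ'_bdd x (Set.Ioo_subset_Icc_self hx))
    simpa [smul_eq_mul] using this
  have hwφ'_ii : IntervalIntegrable (fun s => w s * φ' s) volume 0 t := by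
    rw [intervalIntegrable_iff, Set.uIoc_of_le ht0.le, integrableOn_Ioc_iff_integrableOn_Ioo]
    exact hwφ'_int
  -- the set integral equals the interval integral
  have hIeq : ∫ s in Set.Ioo 0 t, w s * φ' s = ∫ s in (0:ℝ)..t, w s * φ' s := by
    rw [intervalIntegral.integral_of_le ht0.le, integral_Ioc_eq_integral_Ioo]
  -- main bound for each ε
  have hmain : ∀ ε ∈ Set.Ioo (0:ℝ) t,
      (∫ s in (0:ℝ)..t, w s * φ' s) ≤ 3 * M ^ 2 * ε ^ (2 - α) / Real.Gamma (1 - α) := by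
    intro ε hε
    obtain ⟨hε0, hεt⟩ := hε
    set a : ℝ := t - ε with ha_def
    have ha0 : 0 < a := by simp only [ha_def]; linarith
    have hat : a < t := by simp only [ha_def]; linarith
    have hta : t - a = ε := by simp only [ha_def]; ring
    -- derivative of w
    set W' : ℝ → ℝ := fun s =>
      ((1 - α) - 1) * (t - s) ^ ((1 - α) - 1 - 1) * (-1) / Real.Gamma (1 - α) with hW'_def
    have hwd : ∀ s : ℝ, s < t → HasDerivAt w (W' s) s := by
      intro s hst
      have hts : t - s ≠ 0 := ne_of_gt (by linarith)
      have h1 : HasDerivAt (fun s : ℝ => t - s) (-1) s := (hasDerivAt_id s).const_sub t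
      have h2 : HasDerivAt (fun x : ℝ => x ^ ((1 - α) - 1))
          (((1 - α) - 1) * (t - s) ^ ((1 - α) - 1 - 1)) (t - s) :=
        Real.hasDerivAt_rpow_const (Or.inl hts)
      have h3 := (h2.comp s h1).div_const (Real.Gamma (1 - α))
      simpa [Function.comp, hW'_def, hw_def] using h3
    have hW'_nonneg : ∀ s : ℝ, s ≤ t → 0 ≤ W' s := by
      intro s hst
      have h1 : W' s = α * (t - s) ^ ((1 - α) - 1 - 1) / Real.Gamma (1 - α) := by
        rw [hW'_def]; ring
      rw [h1]
      have := Real.rpow_nonneg (show (0:ℝ) ≤ t - s by linarith) ((1 - α) - 1 - 1)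
      positivity
    -- continuity of w and W' away from t
    have hw_cont : ContinuousOn w (Set.Icc 0 a) := by
      refine ((continuousOn_const.sub continuousOn_id).rpow_const ?_).div_const _
      intro x hx
      refine Or.inl fun h => ?_
      simp only [Set.mem_Icc] at hx; simp only [Pi.sub_apply, id] at h; linarith [hx.2]
    have hW'_cont : ContinuousOn W' (Set.Icc 0 a) := by
      refine ((continuousOn_const.mul
        ((continuousOn_const.sub continuousOn_id).rpow_const ?_)).mul
        continuousOn_const).div_const _
      intro x hx
      refine Or.inl fun h => ?_
      simp only [Set.mem_Icc] at hx; simp only [Pi.sub_apply, id] at h; linarith [hx.2]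
    -- IBP on [0, a]
    have hIBP := intervalIntegral.integral_mul_deriv_eq_deriv_mul_of_hasDerivAt
      (a := 0) (b := a) (u := w) (v := φ) (u' := W') (v' := φ')
      (by rwa [Set.uIcc_of_le ha0.le])
      (by rw [Set.uIcc_of_le ha0.le]
          exact hφ_cont.mono (fun x hx => hsub ⟨hx.1, hx.2.trans hat.le⟩))
      (by rw [min_eq_left ha0.le, max_eq_right ha0.le]
          exact fun x hx => hwd x (hx.2.trans hat))
      (by rw [min_eq_left ha0.le, max_eq_right ha0.le]
          exact fun x hx => hφd x ⟨hx.1.le, hx.2.le.trans (hat.le.trans htT.le)⟩)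
      (hW'_cont.intervalIntegrable_of_Icc ha0.le)
      ((hφ'_cont.mono (fun x hx => hsub ⟨hx.1, hx.2.trans hat.le⟩)).intervalIntegrable_of_Icc ha0.le)
    -- nonnegativity of the dropped terms
    have h5 : 0 ≤ ∫ x in (0:ℝ)..a, W' x * φ x :=
      intervalIntegral.integral_nonneg ha0.le
        (fun x hx => mul_nonneg (hW'_nonneg x (hx.2.trans hat.le)) (hφ_nonneg x))
    have h6 : 0 ≤ w 0 * φ 0 := mul_nonneg (hw_nonneg 0 ht0.le) (hφ_nonneg 0)
    -- bound on the boundary term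
    have h7 : w a * φ a ≤ M ^ 2 * ε ^ (2 - α) / Real.Gamma (1 - α) := by
      have hwa : w a = ε ^ ((1 - α) - 1) / Real.Gamma (1 - α) := by
        rw [hw_def]; simp only [hta]
      have hφa : φ a ≤ (M * ε) ^ 2 := by
        have h1 : ‖u t - u a‖ ≤ M * ε := by
          have := hLip a ⟨ha0.le, hat.le⟩
          rwa [hta] at this
        calc φ a = ‖u t - u a‖ ^ 2 := rfl
          _ ≤ (M * ε) ^ 2 := by
              exact pow_le_pow_left₀ (norm_nonneg _) h1 2
      have hwa_nonneg : 0 ≤ w a := hw_nonneg a hat.le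
      calc w a * φ a ≤ w a * (M * ε) ^ 2 := mul_le_mul_of_nonneg_left hφa hwa_nonneg
        _ = M ^ 2 * ε ^ (2 - α) / Real.Gamma (1 - α) := by
            rw [hwa, mul_pow, ← Real.rpow_natCast ε 2]
            rw [div_mul_eq_mul_div, mul_comm, mul_assoc, ← Real.rpow_add hε0,
              show ((2:ℕ):ℝ) + (1 - α - 1) = 2 - α by push_cast; ring]
    -- tail bound
    have h8 : ‖∫ x in a..t, w x * φ' x‖ ≤ (2 * M ^ 2 * ε ^ (1 - α) / Real.Gamma (1 - α)) * |t - a| := by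
      apply intervalIntegral.norm_integral_le_of_norm_le_const
      intro x hx
      rw [Set.uIoc_of_le hat.le] at hx
      have hx0 : 0 < x := lt_trans ha0 hx.1
      have hxt : x ≤ t := hx.2
      have hbb : ‖(inner ℝ (u' x) (u t - u x) : ℝ)‖ ≤ M * (M * (t - x)) :=
        calc ‖(inner ℝ (u' x) (u t - u x) : ℝ)‖ ≤ ‖u' x‖ * ‖u t - u x‖ := norm_inner_le_norm _ _
          _ ≤ M * (M * (t - x)) := mul_le_mul (hM x (hsub ⟨hx0.le, hxt⟩))
              (hLip x ⟨hx0.le, hxt⟩) (norm_nonneg _) hM0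
      have hφ'x : ‖φ' x‖ ≤ 2 * (M * (M * (t - x))) := by
        calc ‖φ' x‖ = 2 * ‖(inner ℝ (u' x) (u t - u x) : ℝ)‖ := by
              simp only [hφ'_def]; rw [norm_neg, norm_mul]; norm_num
          _ ≤ 2 * (M * (M * (t - x))) := by linarith
      have hwx : 0 ≤ w x := hw_nonneg x hxt
      have hkey2 : w x * (t - x) ≤ ε ^ (1 - α) / Real.Gamma (1 - α) := by
        rcases eq_or_lt_of_le hxt with heq | hlt
        · have : t - x = 0 := by rw [heq]; ring
          rw [this, mul_zero]
          positivity
        · have htx : (0:ℝ) < t - x := by linarith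
          have h1 : w x * (t - x) = (t - x) ^ (1 - α) / Real.Gamma (1 - α) := by
            rw [hw_def]
            rw [div_mul_eq_mul_div, ← Real.rpow_add_one (ne_of_gt htx),
              show (1:ℝ) - α - 1 + 1 = 1 - α by ring]
          rw [h1]
          have h2 : (t - x) ^ (1 - α) ≤ ε ^ (1 - α) :=
            Real.rpow_le_rpow (by linarith) (by linarith [hx.1]) hβ.le
          gcongr
      calc ‖w x * φ' x‖ = w x * ‖φ' x‖ := by
            rw [norm_mul, Real.norm_eq_abs, abs_of_nonneg hwx]
        _ ≤ w x * (2 * (M * (M * (t - x)))) := mul_le_mul_of_nonneg_left hφ'x hwx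
        _ = 2 * M ^ 2 * (w x * (t - x)) := by ring
        _ ≤ 2 * M ^ 2 * (ε ^ (1 - α) / Real.Gamma (1 - α)) := by
            refine mul_le_mul_of_nonneg_left hkey2 (by positivity)
        _ = 2 * M ^ 2 * ε ^ (1 - α) / Real.Gamma (1 - α) := by ring
    -- combine
    have hsplit : (∫ s in (0:ℝ)..t, w s * φ' s)
        = (∫ s in (0:ℝ)..a, w s * φ' s) + ∫ s in a..t, w s * φ' s := by
      have hii1 : IntervalIntegrable (fun s => w s * φ' s) volume 0 a := by
        refine hwφ'_ii.mono_set ?_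
        rw [Set.uIcc_of_le ha0.le, Set.uIcc_of_le ht0.le]
        exact Set.Icc_subset_Icc le_rfl hat.le
      have hii2 : IntervalIntegrable (fun s => w s * φ' s) volume a t := by
        refine hwφ'_ii.mono_set ?_
        rw [Set.uIcc_of_le hat.le, Set.uIcc_of_le ht0.le]
        exact Set.Icc_subset_Icc ha0.le le_rfl
      rw [intervalIntegral.integral_add_adjacent_intervals hii1 hii2]
    have htail : ∫ s in a..t, w s * φ' s ≤ 2 * M ^ 2 * ε ^ (2 - α) / Real.Gamma (1 - α) := by
      have h9 := le_trans (le_abs_self _) h8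
      have h10 : |t - a| = ε := by rw [hta, abs_of_pos hε0]
      rw [h10] at h9
      calc ∫ s in a..t, w s * φ' s ≤ 2 * M ^ 2 * ε ^ (1 - α) / Real.Gamma (1 - α) * ε := h9
        _ = 2 * M ^ 2 * (ε ^ (1 - α) * ε) / Real.Gamma (1 - α) := by ring
        _ = 2 * M ^ 2 * ε ^ (2 - α) / Real.Gamma (1 - α) := by
            rw [← Real.rpow_add_one (ne_of_gt hε0),
              show (1:ℝ) - α + 1 = 2 - α by ring]
    have hhead : ∫ s in (0:ℝ)..a, w s * φ' s ≤ M ^ 2 * ε ^ (2 - α) / Real.Gamma (1 - α) := by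
      rw [hIBP]
      linarith
    rw [hsplit]
    have hfin := add_le_add hhead htail
    calc (∫ s in (0:ℝ)..a, w s * φ' s) + ∫ s in a..t, w s * φ' s
        ≤ M ^ 2 * ε ^ (2 - α) / Real.Gamma (1 - α)
          + 2 * M ^ 2 * ε ^ (2 - α) / Real.Gamma (1 - α) := hfin
      _ = 3 * M ^ 2 * ε ^ (2 - α) / Real.Gamma (1 - α) := by ring
  -- pass to the limit ε → 0⁺
  have htends : Filter.Tendsto (fun ε : ℝ => 3 * M ^ 2 * ε ^ (2 - α) / Real.Gamma (1 - α))
      (nhdsWithin 0 (Set.Ioi 0)) (nhds 0) := by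
    have h1 : Filter.Tendsto (fun ε : ℝ => ε ^ (2 - α)) (nhds 0) (nhds 0) := by
      have h2 := (Real.continuousAt_rpow_const 0 (2 - α) (Or.inr (by linarith))).tendsto
      simpa [Real.zero_rpow (show (2:ℝ) - α ≠ 0 by intro h; linarith)] using h2
    have h3 := (h1.const_mul (3 * M ^ 2)).div_const (Real.Gamma (1 - α))
    simpa using h3.mono_left nhdsWithin_le_nhds
  have hI : (∫ s in (0:ℝ)..t, w s * φ' s) ≤ 0 := by
    refine ge_of_tendsto htends ?_
    filter_upwards [Ioo_mem_nhdsGT_of_mem ⟨le_refl (0:ℝ), ht0⟩] with ε hε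
    exact hmain ε hε
  -- conclude
  have hfinal : ∫ s in Set.Ioo 0 t, w s * (inner ℝ (u' s) (u t - u s) : ℝ)
      = (-(1/2:ℝ)) * ∫ s in Set.Ioo 0 t, w s * φ' s := by
    rw [← integral_const_mul]
    refine setIntegral_congr_fun measurableSet_Ioo fun s hs => ?_
    rw [hφ'_def]; ring
  rw [hfinal, hIeq]
  nlinarith [hI]
end

section
/- Let H be a real Hilbert space, α ∈ (0,1), T > 0, λ ∈ ℝ, and let f : H → ℝ be Fréchet differentiable and λ-convex with respect to H, i.e. x ↦ f(x) − (λ/2)‖x‖²_H is convex. Then for every u ∈ C¹([0,T); H) and every t ∈ (0,T): (∂ₜ^α (f ∘ u))(t) ≤ ⟨f′(u(t)), (∂ₜ^α u)(t)⟩ + (λ/2)(∂ₜ^α ‖u‖²_H)(t) − λ ⟨(∂ₜ^α u)(t), u(t)⟩_H, where f′(u(t)) ∈ H* acts on (∂ₜ^α u)(t). -/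
set_option maxHeartbeats 1000000
set_option synthInstance.maxHeartbeats 400000

open MeasureTheory Set Filter Topology

section Aux

variable {H : Type*} [NormedAddCommGroup H] [InnerProductSpace ℝ H]

lemma grad_ineq {H : Type*} [NormedAddCommGroup H] [NormedSpace ℝ H] {φ : H → ℝ}
    (hconv : ConvexOn ℝ Set.univ φ) {y : H} {L : H →L[ℝ] ℝ} (hd : HasFDerivAt φ L y) (x : H) :
    φ y + L (x - y) ≤ φ x := by
  set ψ : ℝ → ℝ := fun r => φ (y + r • (x - y)) with hψ
  have hline : HasDerivAt (fun r : ℝ => y + r • (x - y)) (x - y) 0 := by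
    simpa using ((hasDerivAt_id (0:ℝ)).smul_const (x - y)).const_add y
  have hd' : HasFDerivAt φ L (y + (0:ℝ) • (x - y)) := by simpa using hd
  have hd0 : HasDerivAt ψ (L (x - y)) 0 := by
    exact hd'.comp_hasDerivAt (x := (0:ℝ)) hline
  have hψconv : ConvexOn ℝ Set.univ ψ := by
    have := hconv.comp_affineMap (AffineMap.lineMap y x : ℝ →ᵃ[ℝ] H)
    simp only [Set.preimage_univ] at this
    rw [show ψ = φ ∘ ⇑(AffineMap.lineMap y x : ℝ →ᵃ[ℝ] H) from ?_]
    · exact this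
    funext r
    simp [ψ, AffineMap.lineMap_apply, Function.comp]
    congr 1
    module
  have hs := hψconv.le_slope_of_hasDerivAt (Set.mem_univ 0) (Set.mem_univ 1) one_pos hd0
  have h0 : ψ 0 = φ y := by simp [ψ]
  have h1 : ψ 1 = φ x := by simp [ψ]
  rw [slope_def_field] at hs
  simp [h0, h1, div_one] at hs
  rw [map_sub]
  linarith [hs]

lemma phi_deriv (lam : ℝ) (f : H → ℝ) (f' : H → H →L[ℝ] ℝ) (hf : ∀ x, HasFDerivAt f (f' x) x)
    (x : H) : HasFDerivAt (fun x => f x - lam / 2 * ‖x‖ ^ 2)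
      (f' x - lam • innerSL ℝ x) x := by
  have h2 : HasFDerivAt (fun x : H => lam / 2 * ‖x‖ ^ 2)
      ((lam / 2) • (2 • innerSL ℝ x)) x :=
    ((hasStrictFDerivAt_norm_sq x).hasFDerivAt).const_mul (lam / 2)
  have := (hf x).sub h2
  refine this.congr_fderiv ?_
  ext y
  simp
  ring

lemma bound_fprime [CompleteSpace H] (lam : ℝ) (f : H → ℝ) (f' : H → H →L[ℝ] ℝ)
    (hf : ∀ x, HasFDerivAt f (f' x) x)
    (hconv : ConvexOn ℝ Set.univ (fun x => f x - lam / 2 * ‖x‖ ^ 2))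
    (u : ℝ → H) (a b : ℝ) (hucont : ContinuousOn u (Icc a b)) :
    ∃ C, ∀ s ∈ Icc a b, ‖f' (u s)‖ ≤ C := by
  set φ : H → ℝ := fun x => f x - lam / 2 * ‖x‖ ^ 2 with hφ
  have hφc : Continuous φ := by
    have hfc : Continuous f :=
      continuous_iff_continuousAt.2 fun x => (hf x).differentiableAt.continuousAt
    fun_prop
  set G : (Icc a b) → H →L[ℝ] ℝ := fun i => f' (u i.1) - lam • innerSL ℝ (u i.1) with hG
  have hBS : ∃ C', ∀ i, ‖G i‖ ≤ C' := by
    apply banach_steinhaus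
    intro h
    have hψc : ContinuousOn
        (fun s => |φ (u s + h)| + |φ (u s - h)| + 2 * |φ (u s)|) (Icc a b) := by
      fun_prop
    obtain ⟨C, hC⟩ := (isCompact_Icc).exists_bound_of_continuousOn hψc
    refine ⟨C, fun i => ?_⟩
    have hd := phi_deriv lam f f' hf (u i.1)
    have h1 := grad_ineq hconv hd (u i.1 + h)
    have h2 := grad_ineq hconv hd (u i.1 - h)
    rw [add_sub_cancel_left] at h1
    rw [sub_sub_cancel_left, map_neg] at h2
    have hCi := hC i.1 i.2
    rw [Real.norm_eq_abs] at hCi ⊢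
    have hai : |φ (u i.1 + h)| + |φ (u i.1 - h)| + 2 * |φ (u i.1)| ≤ C :=
      (le_abs_self _).trans hCi
    rw [abs_le]
    constructor
    · cases abs_cases (φ (u i.1 - h)) <;> cases abs_cases (φ (u i.1)) <;>
        cases abs_cases (φ (u i.1 + h)) <;> simp only [hG] at * <;> linarith
    · cases abs_cases (φ (u i.1 - h)) <;> cases abs_cases (φ (u i.1)) <;>
        cases abs_cases (φ (u i.1 + h)) <;> simp only [hG] at * <;> linarith
  obtain ⟨C', hC'⟩ := hBS
  obtain ⟨Cu, hCu⟩ := (isCompact_Icc).exists_bound_of_continuousOn hucont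
  refine ⟨C' + |lam| * Cu, fun s hs => ?_⟩
  have : f' (u s) = G ⟨s, hs⟩ + lam • innerSL ℝ (u s) := by simp [hG]
  rw [this]
  refine (norm_add_le _ _).trans ?_
  have h1 := hC' ⟨s, hs⟩
  have h2 : ‖lam • innerSL ℝ (u s)‖ ≤ |lam| * Cu := by
    rw [norm_smul (α := ℝ) (β := H →L[ℝ] ℝ) lam (innerSL ℝ (u s)), innerSL_apply_norm,
      Real.norm_eq_abs]
    exact mul_le_mul_of_nonneg_left (hCu s hs) (abs_nonneg _)
  linarith

end Aux

/-- Fractional chain inequality for `λ`-convex Fréchet differentiable functionals: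
for `u ∈ C¹([0,T);H)` and `t ∈ (0,T)`,
`∂ₜ^α (f∘u)(t) ≤ ⟨f'(u(t)), ∂ₜ^α u(t)⟩ + (λ/2) ∂ₜ^α ‖u‖²(t) − λ ⟨∂ₜ^α u(t), u(t)⟩`,
where `(∂ₜ^α v)(t) = ∫₀ᵗ g_{1-α}(t-s) v'(s) ds` with `g_β(t) = t^(β-1)/Γ(β)`. -/
theorem fractional_chain_semiconvex {H : Type*} [NormedAddCommGroup H] [InnerProductSpace ℝ H]
    [CompleteSpace H]
    (α T lam : ℝ) (hα : α ∈ Set.Ioo (0:ℝ) 1) (hT : 0 < T)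
    (f : H → ℝ) (f' : H → H →L[ℝ] ℝ)
    (hf : ∀ x, HasFDerivAt f (f' x) x)
    (hconv : ConvexOn ℝ Set.univ (fun x => f x - lam / 2 * ‖x‖ ^ 2))
    (u u' : ℝ → H)
    (hu : ∀ t ∈ Set.Ico (0:ℝ) T, HasDerivAt u (u' t) t)
    (hu' : ContinuousOn u' (Set.Ico 0 T)) :
    ∀ t ∈ Set.Ioo (0:ℝ) T,
      (∫ s in Set.Ioo 0 t,
          ((t - s) ^ ((1 - α) - 1) / Real.Gamma (1 - α)) * deriv (fun r => f (u r)) s)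
        ≤ f' (u t) (∫ s in Set.Ioo 0 t, ((t - s) ^ ((1 - α) - 1) / Real.Gamma (1 - α)) • u' s)
          + lam / 2 * (∫ s in Set.Ioo 0 t,
              ((t - s) ^ ((1 - α) - 1) / Real.Gamma (1 - α)) * deriv (fun r => ‖u r‖ ^ 2) s)
          - lam * (inner ℝ (∫ s in Set.Ioo 0 t,
              ((t - s) ^ ((1 - α) - 1) / Real.Gamma (1 - α)) • u' s) (u t) : ℝ) := by
  obtain ⟨hα0, hα1⟩ := hα
  intro t ht
  obtain ⟨ht0, htT⟩ := ht
  have hΓ : (0:ℝ) < Real.Gamma (1 - α) := Real.Gamma_pos_of_pos (by linarith)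
  simp only [show (1:ℝ) - α - 1 = -α from by ring]
  set g : ℝ → ℝ := fun s => (t - s) ^ (-α) / Real.Gamma (1 - α) with hgdef
  set q : ℝ → ℝ := fun s => deriv (fun r => f (u r)) s with hqdef
  -- basic facts about u
  have hsubIco : Icc (0:ℝ) t ⊆ Ico 0 T := fun s hs => ⟨hs.1, lt_of_le_of_lt hs.2 htT⟩
  have hucont : ContinuousOn u (Ico 0 T) := fun s hs =>
    ((hu s hs).continuousAt).continuousWithinAt
  have hqs : ∀ s ∈ Ico (0:ℝ) T, q s = f' (u s) (u' s) := fun s hs =>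
    ((hf (u s)).comp_hasDerivAt s (hu s hs)).deriv
  have hDs : ∀ s ∈ Ico (0:ℝ) T, deriv (fun r => ‖u r‖ ^ 2) s
      = 2 * (inner ℝ (u s) (u' s) : ℝ) := fun s hs => ((hu s hs).norm_sq).deriv
  -- bounds
  obtain ⟨C1, hC1⟩ := bound_fprime lam f f' hf hconv u 0 t (hucont.mono hsubIco)
  obtain ⟨C2, hC2⟩ := isCompact_Icc.exists_bound_of_continuousOn (hucont.mono hsubIco)
  obtain ⟨C3, hC3⟩ := isCompact_Icc.exists_bound_of_continuousOn (hu'.mono hsubIco)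
  have htmem : t ∈ Icc (0:ℝ) t := ⟨ht0.le, le_refl t⟩
  have h0mem : (0:ℝ) ∈ Icc (0:ℝ) t := ⟨le_refl 0, ht0.le⟩
  have hC1n : 0 ≤ C1 := (norm_nonneg _).trans (hC1 0 h0mem)
  have hC2n : 0 ≤ C2 := (norm_nonneg _).trans (hC2 0 h0mem)
  have hC3n : 0 ≤ C3 := (norm_nonneg _).trans (hC3 0 h0mem)
  -- F and its derivative
  set F : ℝ → ℝ := fun s => f (u s) - f' (u t) (u s) - lam / 2 * ‖u s‖ ^ 2
      + lam * (inner ℝ (u s) (u t) : ℝ) with hFdef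
  set F' : ℝ → ℝ := fun s => q s - f' (u t) (u' s) - lam * (inner ℝ (u s) (u' s) : ℝ)
      + lam * (inner ℝ (u' s) (u t) : ℝ) with hF'def
  have hFd : ∀ s ∈ Ico (0:ℝ) T, HasDerivAt F (F' s) s := by
    intro s hs
    have h1 : HasDerivAt (fun r => f (u r)) (f' (u s) (u' s)) s :=
      (hf (u s)).comp_hasDerivAt s (hu s hs)
    have h2 : HasDerivAt (fun r => f' (u t) (u r)) (f' (u t) (u' s)) s :=
      (f' (u t)).hasFDerivAt.comp_hasDerivAt s (hu s hs)
    have h3 : HasDerivAt (fun r => ‖u r‖ ^ 2) (2 * (inner ℝ (u s) (u' s) : ℝ)) s :=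
      (hu s hs).norm_sq
    have h4 : HasDerivAt (fun r => (inner ℝ (u r) (u t) : ℝ)) ((inner ℝ (u' s) (u t) : ℝ)) s := by
      simpa using (hu s hs).inner ℝ (hasDerivAt_const s (u t))
    have hc := (((h1.sub h2).sub (h3.const_mul (lam / 2))).add (h4.const_mul lam))
    have hq' : q s = f' (u s) (u' s) := hqs s hs
    refine hc.congr_deriv ?_
    rw [hF'def]
    simp only [hq']
    ring
  -- F t is the minimum
  have hFt : ∀ s : ℝ, F t ≤ F s := by
    intro s
    have hd := phi_deriv lam f f' hf (u t)
    have hgi := grad_ineq hconv hd (u s)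
    simp only [ContinuousLinearMap.sub_apply, ContinuousLinearMap.smul_apply, innerSL_apply_apply,
      map_sub, smul_eq_mul, inner_sub_right] at hgi
    have hsym : (inner ℝ (u t) (u s) : ℝ) = (inner ℝ (u s) (u t) : ℝ) := real_inner_comm _ _
    have hnrm : (inner ℝ (u t) (u t) : ℝ) = ‖u t‖ ^ 2 := real_inner_self_eq_norm_sq _
    rw [hsym, hnrm] at hgi
    simp only [hFdef]
    rw [hnrm]
    linarith [hgi]
  -- kernel facts
  have hgnonneg : ∀ s : ℝ, s ≤ t → 0 ≤ g s := fun s hs =>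
    div_nonneg (Real.rpow_nonneg (by linarith) _) hΓ.le
  set g' : ℝ → ℝ := fun s => α * (t - s) ^ (-α - 1) / Real.Gamma (1 - α) with hg'def
  have hg'nonneg : ∀ s : ℝ, s ≤ t → 0 ≤ g' s := fun s hs =>
    div_nonneg (mul_nonneg hα0.le (Real.rpow_nonneg (by linarith) _)) hΓ.le
  have hgd : ∀ s : ℝ, s < t → HasDerivAt g (g' s) s := by
    intro s hs
    have hts : (0:ℝ) < t - s := by linarith
    have h1 := Real.hasDerivAt_rpow_const (x := t - s) (p := -α) (Or.inl hts.ne')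
    have h2 : HasDerivAt (fun r : ℝ => t - r) (-1) s := (hasDerivAt_id s).const_sub t
    have h3 := (h1.comp s h2).div_const (Real.Gamma (1 - α))
    refine h3.congr_deriv ?_
    simp only [hg'def]
    ring
  have hgint : IntervalIntegrable g volume 0 t := by
    have h1 : IntervalIntegrable (fun x : ℝ => x ^ (-α)) volume 0 t :=
      intervalIntegral.intervalIntegrable_rpow' (by linarith)
    have h2 := h1.comp_sub_left t
    simp only [sub_zero, sub_self] at h2
    exact (h2.symm).div_const _
  have hgIoc : IntegrableOn g (Ioc 0 t) volume :=
    (intervalIntegrable_iff_integrableOn_Ioc_of_le ht0.le).1 hgint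
  have hmul : ∀ (w : ℝ → ℝ) (Cw : ℝ), AEStronglyMeasurable w (volume.restrict (Ioc 0 t)) →
      (∀ s ∈ Ioc (0:ℝ) t, ‖w s‖ ≤ Cw) →
      IntegrableOn (fun s => g s * w s) (Ioc 0 t) volume := by
    intro w Cw hm hb
    have h := hgIoc.bdd_mul (c := Cw) hm
      ((ae_restrict_iff' measurableSet_Ioc).2 (Eventually.of_forall hb))
    exact h.congr (Eventually.of_forall fun s => mul_comm _ _)
  -- measurability
  have hIocsub : Ioc (0:ℝ) t ⊆ Ico 0 T := fun s hs => ⟨hs.1.le, lt_of_le_of_lt hs.2 htT⟩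
  have hIocIcc : Ioc (0:ℝ) t ⊆ Icc 0 t := Ioc_subset_Icc_self
  have hqm : AEStronglyMeasurable q (volume.restrict (Ioc 0 t)) :=
    (measurable_deriv _).aestronglyMeasurable
  have hw2m : AEStronglyMeasurable (fun s => f' (u t) (u' s)) (volume.restrict (Ioc 0 t)) :=
    (((f' (u t)).continuous.comp_continuousOn hu').mono hIocsub).aestronglyMeasurable
      measurableSet_Ioc
  have hw3m : AEStronglyMeasurable (fun s => (inner ℝ (u s) (u' s) : ℝ))
      (volume.restrict (Ioc 0 t)) :=
    ((hucont.inner hu').mono hIocsub).aestronglyMeasurable measurableSet_Ioc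
  have hw4m : AEStronglyMeasurable (fun s => (inner ℝ (u' s) (u t) : ℝ))
      (volume.restrict (Ioc 0 t)) :=
    ((hu'.inner continuousOn_const).mono hIocsub).aestronglyMeasurable measurableSet_Ioc
  have hF'm : AEStronglyMeasurable F' (volume.restrict (Ioc 0 t)) := by
    simp only [hF'def]
    exact ((hqm.sub hw2m).sub (hw3m.const_mul lam)).add (hw4m.const_mul lam)
  -- bounds
  have hqb : ∀ s ∈ Icc (0:ℝ) t, ‖q s‖ ≤ C1 * C3 := by
    intro s hs
    rw [hqs s (hsubIco hs)]
    exact ((f' (u s)).le_opNorm _).trans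
      (mul_le_mul (hC1 s hs) (hC3 s hs) (norm_nonneg _) hC1n)
  set CF : ℝ := C1 * C3 + C1 * C3 + |lam| * (C2 * C3) + |lam| * (C3 * C2) with hCFdef
  have hF'b : ∀ s ∈ Icc (0:ℝ) t, ‖F' s‖ ≤ CF := by
    intro s hs
    have h1 : |q s| ≤ C1 * C3 := hqb s hs
    have h2 : |f' (u t) (u' s)| ≤ C1 * C3 := ((f' (u t)).le_opNorm _).trans
      (mul_le_mul (hC1 t htmem) (hC3 s hs) (norm_nonneg _) hC1n)
    have h3 : |(inner ℝ (u s) (u' s) : ℝ)| ≤ C2 * C3 := (abs_real_inner_le_norm _ _).trans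
      (mul_le_mul (hC2 s hs) (hC3 s hs) (norm_nonneg _) hC2n)
    have h4 : |(inner ℝ (u' s) (u t) : ℝ)| ≤ C3 * C2 := (abs_real_inner_le_norm _ _).trans
      (mul_le_mul (hC3 s hs) (hC2 t htmem) (norm_nonneg _) hC3n)
    have h3' : |lam| * |(inner ℝ (u s) (u' s) : ℝ)| ≤ |lam| * (C2 * C3) :=
      mul_le_mul_of_nonneg_left h3 (abs_nonneg lam)
    have h4' : |lam| * |(inner ℝ (u' s) (u t) : ℝ)| ≤ |lam| * (C3 * C2) :=
      mul_le_mul_of_nonneg_left h4 (abs_nonneg lam)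
    simp only [hF'def, Real.norm_eq_abs]
    have ta : |q s - f' (u t) (u' s) - lam * (inner ℝ (u s) (u' s) : ℝ)
        + lam * (inner ℝ (u' s) (u t) : ℝ)|
        ≤ |q s - f' (u t) (u' s) - lam * (inner ℝ (u s) (u' s) : ℝ)|
          + |lam * (inner ℝ (u' s) (u t) : ℝ)| := abs_add_le _ _
    have tb : |q s - f' (u t) (u' s) - lam * (inner ℝ (u s) (u' s) : ℝ)|
        ≤ |q s - f' (u t) (u' s)| + |lam * (inner ℝ (u s) (u' s) : ℝ)| := abs_sub _ _
    have tc : |q s - f' (u t) (u' s)| ≤ |q s| + |f' (u t) (u' s)| := abs_sub _ _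
    rw [abs_mul] at ta tb
    simp only [hCFdef]
    linarith
  -- key inequality : ∫ s in 0..t, g s * F' s ≤ 0
  have hGint : IntervalIntegrable (fun s => g s * F' s) volume 0 t :=
    (intervalIntegrable_iff_integrableOn_Ioc_of_le ht0.le).2
      (hmul F' CF hF'm (fun s hs => hF'b s (hIocIcc hs)))
  haveI hlne : (𝓝[Ioo (0:ℝ) t] t).NeBot := by
    rw [← mem_closure_iff_nhdsWithin_neBot, closure_Ioo (ne_of_lt ht0)]
    exact ⟨ht0.le, le_refl t⟩
  have hA : Tendsto (fun x => ∫ s in (0:ℝ)..x, g s * F' s) (𝓝[Ioo 0 t] t)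
      (𝓝 (∫ s in (0:ℝ)..t, g s * F' s)) := by
    have hcont := intervalIntegral.continuousOn_primitive_interval' hGint
      (left_mem_uIcc (a := (0:ℝ)) (b := t))
    have h := (hcont t right_mem_uIcc).tendsto
    exact h.mono_left (nhdsWithin_mono t (by rw [uIcc_of_le ht0.le]; exact Ioo_subset_Icc_self))
  have htd : HasDerivAt F (F' t) t := hFd t ⟨ht0.le, htT⟩
  have hF't : F' t = 0 := by
    simp only [hF'def, hqs t ⟨ht0.le, htT⟩]
    rw [real_inner_comm (u t) (u' t)]
    ring
  have hslope : Tendsto (slope F t) (𝓝[Ioo 0 t] t) (𝓝 0) := by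
    have h := hasDerivAt_iff_tendsto_slope.1 htd
    rw [hF't] at h
    exact h.mono_left (nhdsWithin_mono _ (fun x hx => ne_of_lt hx.2))
  have hrp : Tendsto (fun x : ℝ => (t - x) ^ ((1:ℝ) - α)) (𝓝[Ioo 0 t] t) (𝓝 0) := by
    have h0 : Tendsto (fun x : ℝ => t - x) (𝓝[Ioo 0 t] t) (𝓝 0) := by
      have h : Tendsto (fun x : ℝ => t - x) (𝓝 t) (𝓝 (t - t)) :=
        ((continuous_const.sub continuous_id).tendsto t)
      rw [sub_self] at h
      exact h.mono_left nhdsWithin_le_nhds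
    have hc : ContinuousAt (fun y : ℝ => y ^ ((1:ℝ) - α)) 0 :=
      Real.continuousAt_rpow_const 0 _ (Or.inr (by linarith))
    have h := hc.tendsto.comp h0
    rwa [Real.zero_rpow (by linarith : (0:ℝ) < 1 - α).ne'] at h
  have hB : Tendsto (fun x => g x * (F x - F t)) (𝓝[Ioo 0 t] t) (𝓝 0) := by
    have hmain : Tendsto (fun x : ℝ => -(1 / Real.Gamma (1 - α)) *
        ((t - x) ^ ((1:ℝ) - α) * slope F t x)) (𝓝[Ioo 0 t] t) (𝓝 0) := by
      have h := (hrp.mul hslope).const_mul (-(1 / Real.Gamma (1 - α)))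
      simpa using h
    refine hmain.congr' ?_
    filter_upwards [self_mem_nhdsWithin] with x hx
    obtain ⟨hx0, hxt⟩ := hx
    have htx : (0:ℝ) < t - x := by linarith
    have hxt' : x - t ≠ 0 := sub_ne_zero.2 (ne_of_lt hxt)
    rw [slope_def_field]
    have hpow : (t - x) ^ ((1:ℝ) - α) = (t - x) ^ (-α) * (t - x) := by
      rw [show (1:ℝ) - α = -α + 1 from by ring, Real.rpow_add_one htx.ne']
    simp only [hgdef]
    rw [hpow]
    field_simp
    ring
  have hCineq : ∀ᶠ x in 𝓝[Ioo (0:ℝ) t] t,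
      (∫ s in (0:ℝ)..x, g s * F' s) ≤ g x * (F x - F t) := by
    filter_upwards [self_mem_nhdsWithin] with x hx
    obtain ⟨hx0, hxt⟩ := hx
    have huIcc : uIcc (0:ℝ) x = Icc 0 x := uIcc_of_le hx0.le
    have hgd' : ∀ s ∈ uIcc (0:ℝ) x, HasDerivAt g (g' s) s := by
      intro s hs; rw [huIcc] at hs; exact hgd s (lt_of_le_of_lt hs.2 hxt)
    have hFd' : ∀ s ∈ uIcc (0:ℝ) x, HasDerivAt (fun r => F r - F t) (F' s) s := by
      intro s hs; rw [huIcc] at hs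
      exact (hFd s ⟨hs.1, lt_trans (lt_of_le_of_lt hs.2 hxt) htT⟩).sub_const (F t)
    have hg'cont : ContinuousOn g' (uIcc (0:ℝ) x) := by
      rw [huIcc]
      apply ContinuousOn.div_const
      apply ContinuousOn.mul continuousOn_const
      apply ContinuousOn.rpow_const ((continuous_const.sub continuous_id).continuousOn)
      intro s hs
      exact Or.inl (by have : s ≤ x := hs.2; have : (0:ℝ) < t - s := by linarith
                       exact this.ne')
    have hg'int : IntervalIntegrable g' volume 0 x := hg'cont.intervalIntegrable
    have hF'int : IntervalIntegrable F' volume 0 x := by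
      rw [intervalIntegrable_iff_integrableOn_Ioc_of_le hx0.le]
      have hconst : IntegrableOn (fun _ : ℝ => CF) (Ioc 0 x) volume :=
        integrableOn_const measure_Ioc_lt_top.ne
      refine Integrable.mono' hconst
        (hF'm.mono_measure (Measure.restrict_mono (Ioc_subset_Ioc le_rfl hxt.le) le_rfl)) ?_
      exact (ae_restrict_iff' measurableSet_Ioc).2
        (Eventually.of_forall fun s hs => hF'b s ⟨hs.1.le, hs.2.trans hxt.le⟩)
    have hibp := intervalIntegral.integral_mul_deriv_eq_deriv_mul hgd' hFd' hg'int hF'int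
    have hpos1 : 0 ≤ g 0 * (F 0 - F t) := mul_nonneg (hgnonneg 0 ht0.le) (sub_nonneg.2 (hFt 0))
    have hpos2 : 0 ≤ ∫ s in (0:ℝ)..x, g' s * (F s - F t) :=
      intervalIntegral.integral_nonneg hx0.le
        (fun s hs => mul_nonneg (hg'nonneg s (hs.2.trans hxt.le)) (sub_nonneg.2 (hFt s)))
    rw [hibp]
    linarith
  have hkey : (∫ s in (0:ℝ)..t, g s * F' s) ≤ 0 := le_of_tendsto_of_tendsto hA hB hCineq
  have hIoo : (∫ s in Ioo (0:ℝ) t, g s * F' s) ≤ 0 := by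
    rw [← MeasureTheory.integral_Ioc_eq_integral_Ioo, ← intervalIntegral.integral_of_le ht0.le]
    exact hkey
  -- integrable pieces on Ioo
  have hI1 : IntegrableOn (fun s => g s * q s) (Ioo 0 t) volume :=
    (hmul q (C1 * C3) hqm (fun s hs => hqb s (hIocIcc hs))).mono_set Ioo_subset_Ioc_self
  have hI2 : IntegrableOn (fun s => g s * f' (u t) (u' s)) (Ioo 0 t) volume :=
    (hmul _ (C1 * C3) hw2m (fun s hs => ((f' (u t)).le_opNorm _).trans
      (mul_le_mul (hC1 t htmem) (hC3 s (hIocIcc hs)) (norm_nonneg _) hC1n))).mono_set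
      Ioo_subset_Ioc_self
  have hI3 : IntegrableOn (fun s => g s * (inner ℝ (u s) (u' s) : ℝ)) (Ioo 0 t) volume :=
    (hmul _ (C2 * C3) hw3m (fun s hs => (abs_real_inner_le_norm _ _).trans
      (mul_le_mul (hC2 s (hIocIcc hs)) (hC3 s (hIocIcc hs)) (norm_nonneg _) hC2n))).mono_set
      Ioo_subset_Ioc_self
  have hI4 : IntegrableOn (fun s => g s * (inner ℝ (u' s) (u t) : ℝ)) (Ioo 0 t) volume :=
    (hmul _ (C3 * C2) hw4m (fun s hs => (abs_real_inner_le_norm _ _).trans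
      (mul_le_mul (hC3 s (hIocIcc hs)) (hC2 t htmem) (norm_nonneg _) hC3n))).mono_set
      Ioo_subset_Ioc_self
  have hv : IntegrableOn (fun s => g s • u' s) (Ioo 0 t) volume := by
    have hmem : MemLp u' ⊤ (volume.restrict (Ioc 0 t)) :=
      memLp_top_of_bound ((hu'.mono hIocsub).aestronglyMeasurable measurableSet_Ioc) C3
        ((ae_restrict_iff' measurableSet_Ioc).2
          (Eventually.of_forall fun s hs => hC3 s (hIocIcc hs)))
    have hvIoc : IntegrableOn (fun s => g s • u' s) (Ioc 0 t) volume :=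
      MeasureTheory.Integrable.smul_of_top_left hgIoc hmem
    exact hvIoc.mono_set Ioo_subset_Ioc_self
  -- fold the goal into g and q notation
  have hfoldg : ∀ s : ℝ, (t - s) ^ (-α) / Real.Gamma (1 - α) = g s := fun s => rfl
  have hfoldq : ∀ s : ℝ, deriv (fun r => f (u r)) s = q s := fun s => rfl
  simp only [hfoldg, hfoldq]
  -- rewrite goal pieces
  have e1 : f' (u t) (∫ s in Ioo (0:ℝ) t, g s • u' s)
      = ∫ s in Ioo (0:ℝ) t, g s * f' (u t) (u' s) := by
    rw [← ContinuousLinearMap.integral_comp_comm _ hv]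
    simp only [_root_.map_smul, smul_eq_mul]
  have e2 : (inner ℝ (∫ s in Ioo (0:ℝ) t, g s • u' s) (u t) : ℝ)
      = ∫ s in Ioo (0:ℝ) t, g s * (inner ℝ (u' s) (u t) : ℝ) := by
    rw [real_inner_comm, ← integral_inner hv (u t)]
    simp_rw [inner_smul_right]
    simp_rw [real_inner_comm (u t)]
  have e3 : (∫ s in Ioo (0:ℝ) t, g s * deriv (fun r => ‖u r‖ ^ 2) s)
      = 2 * ∫ s in Ioo (0:ℝ) t, g s * (inner ℝ (u s) (u' s) : ℝ) := by
    rw [← MeasureTheory.integral_const_mul]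
    apply setIntegral_congr_fun measurableSet_Ioo
    intro s hs
    show g s * deriv (fun r => ‖u r‖ ^ 2) s = 2 * (g s * (inner ℝ (u s) (u' s) : ℝ))
    rw [hDs s (hIocsub (Ioo_subset_Ioc_self hs))]
    ring
  have hexp : (∫ s in Ioo (0:ℝ) t, g s * F' s)
      = (∫ s in Ioo (0:ℝ) t, g s * q s) - (∫ s in Ioo (0:ℝ) t, g s * f' (u t) (u' s))
        - lam * (∫ s in Ioo (0:ℝ) t, g s * (inner ℝ (u s) (u' s) : ℝ))
        + lam * (∫ s in Ioo (0:ℝ) t, g s * (inner ℝ (u' s) (u t) : ℝ)) := by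
    have hfe : (fun s => g s * F' s) = fun s =>
        (g s * q s - g s * f' (u t) (u' s) - lam * (g s * (inner ℝ (u s) (u' s) : ℝ))
          + lam * (g s * (inner ℝ (u' s) (u t) : ℝ))) := by
      funext s; simp only [hF'def]; ring
    have hIa : IntegrableOn (fun s => g s * q s - g s * f' (u t) (u' s)
        - lam * (g s * (inner ℝ (u s) (u' s) : ℝ))) (Ioo 0 t) volume :=
      (hI1.sub hI2).sub (hI3.const_mul lam)
    have hIb : IntegrableOn (fun s => lam * (g s * (inner ℝ (u' s) (u t) : ℝ)))
        (Ioo 0 t) volume := hI4.const_mul lam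
    have hIc : IntegrableOn (fun s => g s * q s - g s * f' (u t) (u' s)) (Ioo 0 t) volume :=
      hI1.sub hI2
    have hId : IntegrableOn (fun s => lam * (g s * (inner ℝ (u s) (u' s) : ℝ)))
        (Ioo 0 t) volume := hI3.const_mul lam
    rw [hfe, MeasureTheory.integral_add hIa hIb,
      MeasureTheory.integral_sub hIc hId,
      MeasureTheory.integral_sub hI1 hI2,
      MeasureTheory.integral_const_mul, MeasureTheory.integral_const_mul]
  rw [e1, e2, e3]
  linarith [hIoo, hexp.symm.le, hexp.le]
end

section
/- Let α ∈ (0,1), T > 0, let H be a real Hilbert space, u₀ ∈ H, and let f : [0,T] → H be continuous and bounded. Define ũ(t,θ) = −c₀(θ) ∫₀ᵗ e^{−c₁(θ)(t−s)} f(s) ds for t ∈ [0,T], θ ∈ (0,1). Then for every t ∈ (0,T], the function θ ↦ w_α(θ) ũ(t,θ) is Bochner integrable on (0,1) and u₀ + ∫₀¹ w_α(θ) ũ(t,θ) dθ = u₀ − ∫₀ᵗ g_α(t−s) f(s) ds. -/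
open MeasureTheory

lemma phi_deriv_s11 {θ : ℝ} (h : θ ∈ Set.Ioo (0:ℝ) 1) :
    HasDerivAt (fun x : ℝ => x / (1 - x)) ((1-θ)⁻¹^2) θ := by
  have h1 : (1:ℝ) - θ ≠ 0 := by nlinarith [h.2]
  have := (hasDerivAt_id θ).div ((hasDerivAt_id θ).const_sub 1) h1
  convert this using 1
  · rfl
  · rfl
  · rfl
  · simp only [id]; field_simp; ring

lemma phi_inj : Set.InjOn (fun x : ℝ => x / (1 - x)) (Set.Ioo 0 1) := by
  intro a ha b hb hab
  have h1 : (1:ℝ) - a ≠ 0 := by nlinarith [ha.2]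
  have h2 : (1:ℝ) - b ≠ 0 := by nlinarith [hb.2]
  field_simp at hab
  linarith

lemma phi_image : (fun x : ℝ => x / (1 - x)) '' (Set.Ioo 0 1) = Set.Ioi 0 := by
  ext y
  constructor
  · rintro ⟨x, hx, rfl⟩
    exact div_pos hx.1 (by nlinarith [hx.2])
  · intro hy
    refine ⟨y / (1 + y), ⟨?_, ?_⟩, ?_⟩
    · exact div_pos hy (by linarith [Set.mem_Ioi.mp hy])
    · rw [div_lt_one (by linarith [Set.mem_Ioi.mp hy])]; linarith [Set.mem_Ioi.mp hy]
    · have : (1:ℝ) + y ≠ 0 := by linarith [Set.mem_Ioi.mp hy]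
      field_simp
      ring

lemma kernel_lemma {α : ℝ} (hα : α ∈ Set.Ioo (0:ℝ) 1) {τ : ℝ} (hτ : 0 < τ) :
    IntegrableOn (fun θ : ℝ => θ ^ (-α) * (1-θ) ^ (α-2) * Real.exp (-(θ/(1-θ)) * τ))
      (Set.Ioo 0 1) ∧
    ∫ θ in Set.Ioo (0:ℝ) 1, θ ^ (-α) * (1-θ) ^ (α-2) * Real.exp (-(θ/(1-θ)) * τ)
      = Real.Gamma (1-α) * τ ^ (α-1) := by
  have hd : ∀ x ∈ Set.Ioo (0:ℝ) 1, HasDerivWithinAt (fun x : ℝ => x / (1 - x))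
      ((fun x : ℝ => (1-x)⁻¹^2) x) (Set.Ioo 0 1) x :=
    fun x hx => (phi_deriv_s11 hx).hasDerivWithinAt
  set g : ℝ → ℝ := fun x => x ^ (-α) * Real.exp (-(τ * x)) with hg
  -- pointwise identity on Ioo 0 1
  have key : ∀ θ ∈ Set.Ioo (0:ℝ) 1,
      |(1-θ)⁻¹^2| • g (θ / (1-θ)) =
      θ ^ (-α) * (1-θ) ^ (α-2) * Real.exp (-(θ/(1-θ)) * τ) := by
    intro θ hθ
    have h0 : (0:ℝ) < θ := hθ.1
    have h1 : (0:ℝ) < 1 - θ := by linarith [hθ.2]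
    have habs : |(1-θ)⁻¹^2| = (1-θ)⁻¹^2 := abs_of_nonneg (by positivity)
    have hdiv : (θ / (1-θ)) ^ (-α) = θ ^ (-α) * ((1-θ) ^ (-α))⁻¹ := by
      rw [Real.div_rpow h0.le h1.le, div_eq_mul_inv]
    have h2 : (1-θ)⁻¹^2 = (1-θ) ^ (-2:ℝ) := by
      rw [inv_pow, Real.rpow_neg h1.le]; congr 1
      rw [← Real.rpow_natCast (1-θ) 2]; norm_num
    have hpow : (1-θ)⁻¹^2 * ((1-θ) ^ (-α))⁻¹ = (1-θ) ^ (α-2) := by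
      rw [h2, ← Real.rpow_neg h1.le, ← Real.rpow_add h1]; congr 1; ring
    rw [smul_eq_mul, habs, hg]
    simp only []
    rw [hdiv]
    have : -(τ * (θ / (1-θ))) = -(θ/(1-θ)) * τ := by ring
    rw [this, ← hpow]
    ring
  have hgi : IntegrableOn g (Set.Ioi 0) := by
    have := integrableOn_rpow_mul_exp_neg_mul_rpow
      (by linarith [hα.2] : (-1:ℝ) < -α) one_pos hτ
    simpa [Real.rpow_one] using this
  have hiff := integrableOn_image_iff_integrableOn_abs_deriv_smul measurableSet_Ioo hd phi_inj g
  rw [phi_image] at hiff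
  have h1 : IntegrableOn (fun x => |(1-x)⁻¹^2| • g (x/(1-x))) (Set.Ioo 0 1) := hiff.mp hgi
  have hval : ∫ x in Set.Ioi (0:ℝ), g x = Real.Gamma (1-α) * τ ^ (α-1) := by
    have h2 : ∫ x in Set.Ioi (0:ℝ), g x
        = ∫ t in Set.Ioi (0:ℝ), t ^ ((1-α) - 1) * Real.exp (-(τ * t)) := by
      refine setIntegral_congr_fun measurableSet_Ioi (fun x _ => ?_)
      simp only [hg]; congr 2; ring
    rw [h2, Real.integral_rpow_mul_exp_neg_mul_Ioi (by linarith [hα.2]) hτ,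
      one_div, Real.inv_rpow hτ.le, ← Real.rpow_neg hτ.le]
    rw [show -(1-α) = α - 1 by ring, mul_comm]
  constructor
  · exact IntegrableOn.congr_fun h1 key measurableSet_Ioo
  · rw [← setIntegral_congr_fun measurableSet_Ioo key,
      ← integral_image_eq_integral_abs_deriv_smul measurableSet_Ioo hd phi_inj g,
      phi_image, hval]


/-- Reconstruction of the fractional integral from the modes: with
`ũ(t,θ) = -c₀(θ) ∫₀ᵗ e^{-c₁(θ)(t-s)} f(s) ds`, `c₀(θ) = 1/(1-θ)`, `c₁(θ) = θ/(1-θ)`,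
for every `t ∈ (0,T]` the function `θ ↦ w_α(θ) ũ(t,θ)` is Bochner integrable on `(0,1)` and
`u₀ + ∫₀¹ w_α(θ) ũ(t,θ) dθ = u₀ - ∫₀ᵗ g_α(t-s) f(s) ds`, where
`w_α(θ) = θ^(-α)(1-θ)^(α-1)/(Γ(1-α)Γ(α))` and `g_α(τ) = τ^(α-1)/Γ(α)`. -/
theorem modes_reconstruct_fractional {H : Type*} [NormedAddCommGroup H]
    [InnerProductSpace ℝ H] [CompleteSpace H]
    (α T : ℝ) (hα : α ∈ Set.Ioo (0:ℝ) 1) (hT : 0 < T)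
    (u₀ : H) (f : ℝ → H)
    (hf : ContinuousOn f (Set.Icc 0 T))
    (M : ℝ) (hbdd : ∀ t ∈ Set.Icc (0:ℝ) T, ‖f t‖ ≤ M) :
    ∀ t ∈ Set.Ioc (0:ℝ) T,
      IntegrableOn
        (fun θ => (θ ^ (-α) * (1 - θ) ^ (α - 1) / (Real.Gamma (1-α) * Real.Gamma α)) •
          (-(1 / (1 - θ)) • ∫ s in Set.Ioo 0 t, Real.exp (-(θ / (1 - θ)) * (t - s)) • f s))
        (Set.Ioo (0:ℝ) 1) ∧
      (u₀ + ∫ θ in Set.Ioo (0:ℝ) 1,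
          (θ ^ (-α) * (1 - θ) ^ (α - 1) / (Real.Gamma (1-α) * Real.Gamma α)) •
            (-(1 / (1 - θ)) • ∫ s in Set.Ioo 0 t, Real.exp (-(θ / (1 - θ)) * (t - s)) • f s))
        = u₀ - ∫ s in Set.Ioo 0 t, ((t - s) ^ (α - 1) / Real.Gamma α) • f s := by
  intro t ht
  have hα0 := hα.1
  have hα1 := hα.2
  have ht0 : 0 < t := ht.1
  have hΓ1 : 0 < Real.Gamma (1-α) := Real.Gamma_pos_of_pos (by linarith)
  have hΓ2 : 0 < Real.Gamma α := Real.Gamma_pos_of_pos hα0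
  set K : ℝ → ℝ → ℝ :=
    fun θ s => θ ^ (-α) * (1-θ) ^ (α-2) * Real.exp (-(θ/(1-θ)) * (t-s))
      / (Real.Gamma (1-α) * Real.Gamma α) with hK
  have hsub : Set.Ioo (0:ℝ) t ⊆ Set.Icc 0 T :=
    fun s hs => ⟨hs.1.le, le_trans hs.2.le ht.2⟩
  have hfm : AEStronglyMeasurable f (volume.restrict (Set.Ioo (0:ℝ) t)) :=
    (hf.mono hsub).aestronglyMeasurable measurableSet_Ioo
  -- joint measurability
  have hKc : ContinuousOn (fun p : ℝ × ℝ => K p.1 p.2)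
      (Set.Ioo (0:ℝ) 1 ×ˢ Set.Ioo (0:ℝ) t) := by
    have c1 : ContinuousOn (fun p : ℝ × ℝ => p.1 ^ (-α))
        (Set.Ioo (0:ℝ) 1 ×ˢ Set.Ioo (0:ℝ) t) :=
      continuousOn_fst.rpow_const fun p hp => Or.inl (ne_of_gt hp.1.1)
    have c2 : ContinuousOn (fun p : ℝ × ℝ => (1 - p.1) ^ (α-2))
        (Set.Ioo (0:ℝ) 1 ×ˢ Set.Ioo (0:ℝ) t) :=
      (continuousOn_const.sub continuousOn_fst).rpow_const
        fun p hp => Or.inl (sub_pos.mpr hp.1.2).ne'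
    have c3 : ContinuousOn (fun p : ℝ × ℝ => Real.exp (-(p.1/(1-p.1)) * (t - p.2)))
        (Set.Ioo (0:ℝ) 1 ×ˢ Set.Ioo (0:ℝ) t) := by
      apply Real.continuous_exp.comp_continuousOn
      exact ((continuousOn_fst.div (continuousOn_const.sub continuousOn_fst)
        fun p hp => (sub_pos.mpr hp.1.2).ne').neg).mul
        (continuousOn_const.sub continuousOn_snd)
    exact ((c1.mul c2).mul c3).div_const _
  have hKm : AEStronglyMeasurable (fun p : ℝ × ℝ => K p.1 p.2 • f p.2)
      ((volume.restrict (Set.Ioo (0:ℝ) 1)).prod (volume.restrict (Set.Ioo (0:ℝ) t))) := by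
    have h1 : AEStronglyMeasurable (fun p : ℝ × ℝ => K p.1 p.2)
        ((volume.restrict (Set.Ioo (0:ℝ) 1)).prod (volume.restrict (Set.Ioo (0:ℝ) t))) := by
      rw [Measure.prod_restrict]
      exact hKc.aestronglyMeasurable (measurableSet_Ioo.prod measurableSet_Ioo)
    exact h1.smul hfm.comp_snd
  -- product integrability
  have hG : Integrable (fun p : ℝ × ℝ => K p.1 p.2 • f p.2)
      ((volume.restrict (Set.Ioo (0:ℝ) 1)).prod (volume.restrict (Set.Ioo (0:ℝ) t))) := by
    rw [integrable_prod_iff' hKm]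
    constructor
    · rw [ae_restrict_iff' measurableSet_Ioo]
      refine ae_of_all _ fun s hs => ?_
      have hτ : 0 < t - s := by linarith [hs.2]
      exact (((kernel_lemma hα hτ).1).div_const _).smul_const (f s)
    · have hml : IntegrableOn (fun s : ℝ => (t-s) ^ (α-1) * (M / Real.Gamma α))
          (Set.Ioo 0 t) := by
        have h1 : IntervalIntegrable (fun x : ℝ => x ^ (α-1)) volume 0 t :=
          intervalIntegral.intervalIntegrable_rpow' (by linarith)
        have h2 := (h1.comp_sub_left t).symm
        simp only [sub_zero, sub_self] at h2
        exact ((h2.1.mono_set Set.Ioo_subset_Ioc_self).mul_const _)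
      have hφ : Integrable (fun s : ℝ => ((t-s) ^ (α-1) / Real.Gamma α) * ‖f s‖)
          (volume.restrict (Set.Ioo (0:ℝ) t)) := by
        apply Integrable.mono' hml
        · refine AEStronglyMeasurable.mul ?_ hfm.norm
          refine ContinuousOn.aestronglyMeasurable ?_ measurableSet_Ioo
          refine ContinuousOn.div_const ?_ _
          exact (continuousOn_const.sub continuousOn_id).rpow_const
            fun s hs => Or.inl (sub_pos.mpr hs.2).ne'
        · rw [ae_restrict_iff' measurableSet_Ioo]
          refine ae_of_all _ fun s hs => ?_
          have h0 : (0:ℝ) ≤ (t-s) ^ (α-1) := Real.rpow_nonneg (by linarith [hs.2]) _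
          have hfs : ‖f s‖ ≤ M := hbdd s (hsub hs)
          rw [Real.norm_eq_abs, abs_of_nonneg (by positivity)]
          rw [div_mul_eq_mul_div, mul_div_assoc]
          gcongr
      apply hφ.congr
      rw [Filter.EventuallyEq, ae_restrict_iff' measurableSet_Ioo]
      refine ae_of_all _ fun s hs => ?_
      have hτ : 0 < t - s := by linarith [hs.2]
      have hk := kernel_lemma hα hτ
      have hnn : ∀ θ ∈ Set.Ioo (0:ℝ) 1, ‖K θ s • f s‖ = K θ s * ‖f s‖ := by
        intro θ hθ
        have h1 : 0 < 1 - θ := by linarith [hθ.2]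
        have hKnn : 0 ≤ K θ s := by
          have e1 := Real.rpow_nonneg hθ.1.le (-α)
          have e2 := Real.rpow_nonneg h1.le (α-2)
          have e3 := (Real.exp_pos (-(θ/(1-θ)) * (t-s))).le
          have : (0:ℝ) < Real.Gamma (1-α) * Real.Gamma α := mul_pos hΓ1 hΓ2
          rw [hK]
          positivity
        rw [norm_smul, Real.norm_eq_abs, abs_of_nonneg hKnn]
      have hcalc : (∫ θ, ‖K θ s • f s‖ ∂(volume.restrict (Set.Ioo (0:ℝ) 1)))
          = ((t-s) ^ (α-1) / Real.Gamma α) * ‖f s‖ := by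
        calc ∫ θ in Set.Ioo (0:ℝ) 1, ‖K θ s • f s‖
            = ∫ θ in Set.Ioo (0:ℝ) 1, K θ s * ‖f s‖ :=
              setIntegral_congr_fun measurableSet_Ioo hnn
          _ = (∫ θ in Set.Ioo (0:ℝ) 1, K θ s) * ‖f s‖ := integral_mul_const _ _
          _ = ((t-s) ^ (α-1) / Real.Gamma α) * ‖f s‖ := by
              have : (∫ θ in Set.Ioo (0:ℝ) 1, K θ s)
                  = (t-s) ^ (α-1) / Real.Gamma α := by
                rw [hK]
                simp only [integral_div]
                rw [hk.2, mul_div_mul_left _ _ hΓ1.ne']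
              rw [this]
      exact hcalc.symm
  -- pointwise identity for the θ-integrand
  have hpt : ∀ θ ∈ Set.Ioo (0:ℝ) 1,
      (θ ^ (-α) * (1 - θ) ^ (α - 1) / (Real.Gamma (1-α) * Real.Gamma α)) •
        (-(1 / (1 - θ)) • ∫ s in Set.Ioo 0 t, Real.exp (-(θ / (1 - θ)) * (t - s)) • f s)
      = -∫ s in Set.Ioo (0:ℝ) t, K θ s • f s := by
    intro θ hθ
    have h1 : (0:ℝ) < 1 - θ := by linarith [hθ.2]
    have hcoef : ∀ s : ℝ,
        (θ ^ (-α) * (1 - θ) ^ (α - 1) / (Real.Gamma (1-α) * Real.Gamma α)) * (1 / (1 - θ)) *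
          Real.exp (-(θ / (1 - θ)) * (t - s)) = K θ s := by
      intro s
      show _ = θ ^ (-α) * (1-θ) ^ (α-2) * Real.exp (-(θ/(1-θ)) * (t-s))
        / (Real.Gamma (1-α) * Real.Gamma α)
      have h2 : (1-θ) ^ (α-1) = (1-θ) ^ (α-2) * (1-θ) := by
        rw [show α - 1 = α - 2 + 1 by ring, Real.rpow_add_one h1.ne']
      rw [h2]
      field_simp
    rw [smul_smul, show
        (θ ^ (-α) * (1 - θ) ^ (α - 1) / (Real.Gamma (1-α) * Real.Gamma α)) * -(1 / (1 - θ))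
        = -((θ ^ (-α) * (1 - θ) ^ (α - 1) / (Real.Gamma (1-α) * Real.Gamma α)) * (1 / (1 - θ)))
        by ring, neg_smul, ← integral_smul]
    congr 1
    refine setIntegral_congr_fun measurableSet_Ioo fun s _ => ?_
    rw [smul_smul, hcoef]
  refine ⟨?_, ?_⟩
  · exact IntegrableOn.congr_fun (hG.integral_prod_left.neg) (fun θ hθ => (hpt θ hθ).symm)
      measurableSet_Ioo
  · have hswap : (∫ θ in Set.Ioo (0:ℝ) 1, ∫ s in Set.Ioo (0:ℝ) t, K θ s • f s)
        = ∫ s in Set.Ioo (0:ℝ) t, ∫ θ in Set.Ioo (0:ℝ) 1, K θ s • f s :=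
      integral_integral_swap hG
    have hval : (∫ s in Set.Ioo (0:ℝ) t, ∫ θ in Set.Ioo (0:ℝ) 1, K θ s • f s)
        = ∫ s in Set.Ioo (0:ℝ) t, ((t - s) ^ (α - 1) / Real.Gamma α) • f s := by
      refine setIntegral_congr_fun measurableSet_Ioo fun s hs => ?_
      have hτ : 0 < t - s := by linarith [hs.2]
      rw [integral_smul_const]
      congr 1
      rw [hK]
      simp only [integral_div]
      rw [(kernel_lemma hα hτ).2, mul_div_mul_left _ _ hΓ1.ne']
    rw [setIntegral_congr_fun measurableSet_Ioo hpt, integral_neg, hswap, hval,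
      ← sub_eq_add_neg]
end

section
/- Let α ∈ (0,1), T > 0, p′ > 1, let H be a real Hilbert space, and let g : (0,T) → H be Bochner measurable with ∫₀^T ‖g(t)‖_H^{p′} dt < ∞. Define for θ ∈ (0,1) and t ∈ (0,T) the mode ũ(t,θ) = −c₀(θ) ∫₀ᵗ e^{−c₁(θ)(t−s)} g(s) ds. Then sup_{θ∈(0,1)} ∫₀^T ‖ũ(t,θ)‖_H^{p′} dt ≤ (T+1)^{p′} · ∫₀^T ‖g(t)‖_H^{p′} dt, i.e. ũ ∈ L^∞(0,1; L^{p′}(0,T; H)) with norm at most (T+1)·‖g‖_{L^{p′}(0,T;H)}. -/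
open MeasureTheory

open Set ENNReal in
/-- Young's convolution inequality, `L¹ * L^p → L^p` form, for `ℝ≥0∞`-valued
measurable functions on `ℝ`. -/
private lemma young_conv {p q : ℝ} (hpq : p.HolderConjugate q) (k h : ℝ → ℝ≥0∞)
    (hk : Measurable k) (hh : Measurable h) :
    ∫⁻ t, (∫⁻ s, k (t - s) * h s) ^ p ≤ (∫⁻ u, k u) ^ p * ∫⁻ s, (h s) ^ p := by
  set K := ∫⁻ u, k u with hKdef
  have hp0 : (0:ℝ) < p := hpq.pos
  have hq0 : (0:ℝ) < q := hpq.symm.pos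
  have hconj : 1 / p + 1 / q = 1 := by
    simpa [one_div] using hpq.inv_add_inv_eq_inv
  -- translation invariance (both variables)
  have htrans : ∀ t : ℝ, ∫⁻ s, k (t - s) = K := fun t =>
    (Measure.measurePreserving_sub_left volume t).lintegral_comp hk
  have htrans' : ∀ s : ℝ, ∫⁻ t, k (t - s) = K := fun s =>
    (measurePreserving_sub_right volume s).lintegral_comp hk
  -- Step 1: pointwise Hölder
  have step1 : ∀ t : ℝ, (∫⁻ s, k (t - s) * h s) ^ p ≤
      (∫⁻ s, k (t - s) * (h s) ^ p) * K ^ (p / q) := by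
    intro t
    have hk1 : Measurable fun s => k (t - s) :=
      hk.comp (measurable_const.sub measurable_id)
    have holder := ENNReal.lintegral_mul_le_Lp_mul_Lq (volume : Measure ℝ) hpq
      (f := fun s => (k (t - s)) ^ (1 / p) * h s)
      (g := fun s => (k (t - s)) ^ (1 / q))
      (((hk1.pow_const _).mul hh).aemeasurable) ((hk1.pow_const _).aemeasurable)
    have hfg : ∀ s : ℝ, ((fun s => (k (t - s)) ^ (1 / p) * h s) *
        fun s => (k (t - s)) ^ (1 / q)) s = k (t - s) * h s := by
      intro s
      have : (k (t - s)) ^ (1 / p) * (k (t - s)) ^ (1 / q) = k (t - s) := by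
        rw [← ENNReal.rpow_add_of_nonneg _ _ (by positivity) (by positivity), hconj,
          ENNReal.rpow_one]
      simp only [Pi.mul_apply]
      calc (k (t - s)) ^ (1 / p) * h s * (k (t - s)) ^ (1 / q)
          = (k (t - s)) ^ (1 / p) * (k (t - s)) ^ (1 / q) * h s := by ring
        _ = k (t - s) * h s := by rw [this]
    have hfp : ∀ s : ℝ, ((k (t - s)) ^ (1 / p) * h s) ^ p = k (t - s) * (h s) ^ p := by
      intro s
      rw [ENNReal.mul_rpow_of_nonneg _ _ hp0.le, ← ENNReal.rpow_mul,
        one_div_mul_cancel hp0.ne', ENNReal.rpow_one]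
    have hgq : ∀ s : ℝ, ((k (t - s)) ^ (1 / q)) ^ q = k (t - s) := by
      intro s
      rw [← ENNReal.rpow_mul, one_div_mul_cancel hq0.ne', ENNReal.rpow_one]
    have key : ∫⁻ s, k (t - s) * h s ≤
        (∫⁻ s, k (t - s) * (h s) ^ p) ^ (1 / p) * K ^ (1 / q) := by
      calc ∫⁻ s, k (t - s) * h s
          = ∫⁻ s, ((fun s => (k (t - s)) ^ (1 / p) * h s) *
              fun s => (k (t - s)) ^ (1 / q)) s := by
            exact (lintegral_congr fun s => (hfg s).symm)
        _ ≤ (∫⁻ s, ((k (t - s)) ^ (1 / p) * h s) ^ p) ^ (1 / p) *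
              (∫⁻ s, ((k (t - s)) ^ (1 / q)) ^ q) ^ (1 / q) := holder
        _ = (∫⁻ s, k (t - s) * (h s) ^ p) ^ (1 / p) * K ^ (1 / q) := by
            rw [lintegral_congr hfp, lintegral_congr hgq, htrans t]
    calc (∫⁻ s, k (t - s) * h s) ^ p
        ≤ ((∫⁻ s, k (t - s) * (h s) ^ p) ^ (1 / p) * K ^ (1 / q)) ^ p :=
          ENNReal.rpow_le_rpow key hp0.le
      _ = (∫⁻ s, k (t - s) * (h s) ^ p) * K ^ (p / q) := by
          rw [ENNReal.mul_rpow_of_nonneg _ _ hp0.le, ← ENNReal.rpow_mul,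
            one_div_mul_cancel hp0.ne', ENNReal.rpow_one, ← ENNReal.rpow_mul,
            show 1 / q * p = p / q by ring]
  -- Step 2: integrate and use Tonelli
  have swap : ∫⁻ t, ∫⁻ s, k (t - s) * (h s) ^ p = K * ∫⁻ s, (h s) ^ p := by
    rw [lintegral_lintegral_swap]
    · have : ∀ s : ℝ, ∫⁻ t, k (t - s) * (h s) ^ p = K * (h s) ^ p := by
        intro s
        have hm2 : Measurable fun t : ℝ => k (t - s) := by fun_prop
        rw [lintegral_mul_const _ hm2, htrans' s]
      rw [lintegral_congr this, lintegral_const_mul _ (hh.pow_const _)]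
    · exact ((hk.comp (measurable_fst.sub measurable_snd)).mul
        ((hh.comp measurable_snd).pow_const _)).aemeasurable
  have hppq : p / q + 1 = p := by
    have h1 : q⁻¹ = 1 - p⁻¹ := by
      have := hpq.inv_add_inv_eq_inv; rw [inv_one] at this; linarith
    have : p / q = p * q⁻¹ := by ring
    rw [this, h1]
    field_simp
    ring
  calc ∫⁻ t, (∫⁻ s, k (t - s) * h s) ^ p
      ≤ ∫⁻ t, (∫⁻ s, k (t - s) * (h s) ^ p) * K ^ (p / q) :=
        lintegral_mono fun t => step1 t
    _ = (∫⁻ t, ∫⁻ s, k (t - s) * (h s) ^ p) * K ^ (p / q) := by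
        rw [lintegral_mul_const _ (Measurable.lintegral_prod_right
          ((hk.comp (measurable_fst.sub measurable_snd)).mul
            ((hh.comp measurable_snd).pow_const _)))]
    _ = K ^ (p / q) * K * ∫⁻ s, (h s) ^ p := by rw [swap]; ring
    _ = K ^ p * ∫⁻ s, (h s) ^ p := by
        have hKK : K ^ (p / q) * K = K ^ p := by
          nth_rewrite 2 [← ENNReal.rpow_one K]
          rw [← ENNReal.rpow_add_of_nonneg _ _ (by positivity) zero_le_one, hppq]
        rw [hKK]

/-- Uniform-in-`θ` `L^{p'}(0,T;H)` bound on the modes: with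
`ũ(t,θ) = -c₀(θ) ∫₀ᵗ e^{-c₁(θ)(t-s)} g(s) ds`, `c₀(θ) = 1/(1-θ)`, `c₁(θ) = θ/(1-θ)`,
for every `θ ∈ (0,1)`,
`∫₀ᵀ ‖ũ(t,θ)‖^{p'} dt ≤ (T+1)^{p'} ∫₀ᵀ ‖g(t)‖^{p'} dt`, i.e.
`ũ ∈ L^∞(0,1; L^{p'}(0,T;H))` with norm at most `(T+1)·‖g‖_{L^{p'}(0,T;H)}`. -/
theorem modes_Linfty_Lp_bound {H : Type*} [NormedAddCommGroup H] [InnerProductSpace ℝ H]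
    [CompleteSpace H]
    (α T p' : ℝ) (hα : α ∈ Set.Ioo (0:ℝ) 1) (hT : 0 < T) (hp : 1 < p')
    (g : ℝ → H)
    (hmeas : AEStronglyMeasurable g (volume.restrict (Set.Ioo 0 T)))
    (hint : (∫⁻ t in Set.Ioo (0:ℝ) T, ENNReal.ofReal (‖g t‖ ^ p')) < ⊤) :
    ∀ θ ∈ Set.Ioo (0:ℝ) 1,
      (∫⁻ t in Set.Ioo (0:ℝ) T, ENNReal.ofReal
          (‖-(1 / (1 - θ)) • ∫ s in Set.Ioo 0 t, Real.exp (-(θ / (1 - θ)) * (t - s)) • g s‖ ^ p'))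
        ≤ ENNReal.ofReal ((T + 1) ^ p') *
            ∫⁻ t in Set.Ioo (0:ℝ) T, ENNReal.ofReal (‖g t‖ ^ p') := by
  intro θ hθ
  obtain ⟨hθ0, hθ1⟩ := hθ
  have h1θ : (0:ℝ) < 1 - θ := by linarith
  set c0 : ℝ := 1 / (1 - θ) with hc0def
  set c1 : ℝ := θ / (1 - θ) with hc1def
  have hc0 : 0 < c0 := by rw [hc0def]; positivity
  have hc1 : 0 < c1 := by rw [hc1def]; positivity
  have hp'0 : (0:ℝ) < p' := lt_trans one_pos hp
  have hpq : p'.HolderConjugate (Real.conjExponent p') := Real.HolderConjugate.conjExponent hp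
  -- the kernel
  set k : ℝ → ENNReal :=
    (Set.Ioo (0:ℝ) T).indicator (fun u => ENNReal.ofReal (c0 * Real.exp (-c1 * u))) with hkdef
  have hkm : Measurable k := by
    apply Measurable.indicator _ measurableSet_Ioo
    fun_prop
  -- the density
  set n : ℝ → ENNReal := fun s => ENNReal.ofReal ‖g s‖ with hndef
  have hn : AEMeasurable ((Set.Ioo (0:ℝ) T).indicator n) volume := by
    rw [aemeasurable_indicator_iff measurableSet_Ioo]
    simpa only [hndef, ofReal_norm] using hmeas.enorm
  set h : ℝ → ENNReal := hn.mk _ with hhdef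
  have hhm : Measurable h := hn.measurable_mk
  have hae : (Set.Ioo (0:ℝ) T).indicator n =ᵐ[volume] h := hn.ae_eq_mk
  -- pointwise bound by the convolution
  have hbound : ∀ t ∈ Set.Ioo (0:ℝ) T,
      ENNReal.ofReal ‖(-c0) • ∫ s in Set.Ioo 0 t, Real.exp (-c1 * (t - s)) • g s‖
        ≤ ∫⁻ s, k (t - s) * h s := by
    intro t ht
    have e1 : ‖(-c0) • ∫ s in Set.Ioo 0 t, Real.exp (-c1 * (t - s)) • g s‖
        = c0 * ‖∫ s in Set.Ioo 0 t, Real.exp (-c1 * (t - s)) • g s‖ := by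
      rw [norm_smul, Real.norm_eq_abs, abs_neg, abs_of_pos hc0]
    have e2 : ENNReal.ofReal ‖∫ s in Set.Ioo 0 t, Real.exp (-c1 * (t - s)) • g s‖
        ≤ ∫⁻ s in Set.Ioo 0 t, ENNReal.ofReal (Real.exp (-c1 * (t - s)) * ‖g s‖) := by
      rw [ofReal_norm]
      refine le_trans (enorm_integral_le_lintegral_enorm _) (le_of_eq ?_)
      refine lintegral_congr fun s => ?_
      rw [← ofReal_norm, norm_smul, Real.norm_eq_abs,
        abs_of_pos (Real.exp_pos _)]
    calc ENNReal.ofReal ‖(-c0) • ∫ s in Set.Ioo 0 t, Real.exp (-c1 * (t - s)) • g s‖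
        = ENNReal.ofReal c0 *
            ENNReal.ofReal ‖∫ s in Set.Ioo 0 t, Real.exp (-c1 * (t - s)) • g s‖ := by
          rw [e1, ENNReal.ofReal_mul hc0.le]
      _ ≤ ENNReal.ofReal c0 *
            ∫⁻ s in Set.Ioo 0 t, ENNReal.ofReal (Real.exp (-c1 * (t - s)) * ‖g s‖) :=
          mul_le_mul_right e2 _
      _ = ∫⁻ s in Set.Ioo 0 t,
            ENNReal.ofReal c0 * ENNReal.ofReal (Real.exp (-c1 * (t - s)) * ‖g s‖) :=
          (lintegral_const_mul' _ _ ENNReal.ofReal_ne_top).symm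
      _ = ∫⁻ s, (Set.Ioo 0 t).indicator
            (fun s => ENNReal.ofReal c0 * ENNReal.ofReal (Real.exp (-c1 * (t - s)) * ‖g s‖)) s :=
          (lintegral_indicator measurableSet_Ioo _).symm
      _ ≤ ∫⁻ s, k (t - s) * (Set.Ioo (0:ℝ) T).indicator n s := by
          refine lintegral_mono fun s => ?_
          by_cases hs : s ∈ Set.Ioo 0 t
          · rw [Set.indicator_of_mem hs]
            have hts : t - s ∈ Set.Ioo (0:ℝ) T :=
              ⟨by simp only [Set.mem_Ioo] at hs ⊢; linarith [hs.2],
               by simp only [Set.mem_Ioo] at hs ht ⊢; linarith [hs.1, ht.2]⟩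
            have hsT : s ∈ Set.Ioo (0:ℝ) T := by
              simp only [Set.mem_Ioo] at hs ht ⊢
              exact ⟨hs.1, lt_trans hs.2 ht.2⟩
            rw [hkdef]
            simp only [Set.indicator_of_mem hts, Set.indicator_of_mem hsT, hndef]
            rw [ENNReal.ofReal_mul (Real.exp_pos _).le, ENNReal.ofReal_mul hc0.le, mul_assoc]
          · rw [Set.indicator_of_notMem hs]
            exact zero_le
      _ = ∫⁻ s, k (t - s) * h s := by
          refine lintegral_congr_ae (hae.mono fun s hs => ?_)
          simp only [hs]
  -- identification of the L^{p'} norm of h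
  have hH : ∫⁻ s, (h s) ^ p' = ∫⁻ t in Set.Ioo (0:ℝ) T, ENNReal.ofReal (‖g t‖ ^ p') := by
    have e0 : ∫⁻ s, (h s) ^ p' = ∫⁻ s, ((Set.Ioo (0:ℝ) T).indicator n s) ^ p' :=
      (lintegral_congr_ae (hae.mono fun s hs => by simp only [hs])).symm
    have e : ∀ s, ((Set.Ioo (0:ℝ) T).indicator n s) ^ p' =
        (Set.Ioo (0:ℝ) T).indicator (fun s => ENNReal.ofReal (‖g s‖ ^ p')) s := by
      intro s
      by_cases hs : s ∈ Set.Ioo (0:ℝ) T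
      · rw [Set.indicator_of_mem hs, Set.indicator_of_mem hs, hndef,
          ← ENNReal.ofReal_rpow_of_nonneg (norm_nonneg _) hp'0.le]
      · rw [Set.indicator_of_notMem hs, Set.indicator_of_notMem hs,
          ENNReal.zero_rpow_of_pos hp'0]
    rw [e0, lintegral_congr e, lintegral_indicator measurableSet_Ioo]
  -- L¹ bound on the kernel
  have hK : ∫⁻ u, k u ≤ ENNReal.ofReal (T + 1) := by
    rcases le_or_gt (θ * (T + 1)) 1 with hcase | hcase
    · -- bound the kernel by the constant c0 on (0,T)
      have hb : ∫⁻ u, k u ≤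
          ∫⁻ u, (Set.Ioo (0:ℝ) T).indicator (fun _ => ENNReal.ofReal c0) u := by
        refine lintegral_mono fun u => ?_
        rw [hkdef]
        by_cases hu : u ∈ Set.Ioo (0:ℝ) T
        · rw [Set.indicator_of_mem hu, Set.indicator_of_mem hu]
          refine ENNReal.ofReal_le_ofReal ?_
          have he : Real.exp (-c1 * u) ≤ 1 := by
            rw [Real.exp_le_one_iff]
            simp only [Set.mem_Ioo] at hu
            nlinarith [hu.1]
          nlinarith
        · rw [Set.indicator_of_notMem hu, Set.indicator_of_notMem hu]
      refine le_trans hb ?_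
      rw [lintegral_indicator_const measurableSet_Ioo, Real.volume_Ioo, sub_zero,
        ← ENNReal.ofReal_mul hc0.le]
      refine ENNReal.ofReal_le_ofReal ?_
      rw [hc0def, one_div, inv_mul_le_iff₀ h1θ]
      nlinarith
    · -- bound the kernel by the full exponential on (0,∞)
      have hb : ∫⁻ u, k u ≤
          ∫⁻ u, (Set.Ioi (0:ℝ)).indicator
            (fun u => ENNReal.ofReal (c0 * Real.exp (-c1 * u))) u := by
        refine lintegral_mono fun u => ?_
        rw [hkdef]
        exact Set.indicator_le_indicator_of_subset Set.Ioo_subset_Ioi_self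
          (fun a => zero_le) u
      refine le_trans hb ?_
      rw [lintegral_indicator measurableSet_Ioi]
      have hInt : IntegrableOn (fun u : ℝ => c0 * Real.exp (-c1 * u)) (Set.Ioi 0) :=
        (exp_neg_integrableOn_Ioi 0 hc1).const_mul c0
      rw [← ofReal_integral_eq_lintegral_ofReal hInt
        (Filter.Eventually.of_forall fun u => by positivity)]
      refine ENNReal.ofReal_le_ofReal ?_
      have h2 := integral_comp_mul_left_Ioi (fun x => Real.exp (-x)) 0 hc1
      simp only [mul_zero, integral_exp_neg_Ioi_zero, smul_eq_mul, mul_one] at h2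
      have hval : (∫ u in Set.Ioi (0:ℝ), c0 * Real.exp (-c1 * u)) = c0 * c1⁻¹ := by
        rw [integral_const_mul]
        simp only [neg_mul] at h2 ⊢
        rw [h2]
      rw [hval]
      have hee : c0 * c1⁻¹ = 1 / θ := by
        rw [hc0def, hc1def]
        field_simp
      rw [hee, div_le_iff₀ hθ0]
      nlinarith
  have hKp : (∫⁻ u, k u) ^ p' ≤ ENNReal.ofReal ((T + 1) ^ p') := by
    rw [← ENNReal.ofReal_rpow_of_nonneg (by linarith : (0:ℝ) ≤ T + 1) hp'0.le]
    exact ENNReal.rpow_le_rpow hK hp'0.le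
  calc ∫⁻ t in Set.Ioo (0:ℝ) T, ENNReal.ofReal
          (‖(-c0) • ∫ s in Set.Ioo 0 t, Real.exp (-c1 * (t - s)) • g s‖ ^ p')
      = ∫⁻ t, (Set.Ioo (0:ℝ) T).indicator (fun t => ENNReal.ofReal
          (‖(-c0) • ∫ s in Set.Ioo 0 t, Real.exp (-c1 * (t - s)) • g s‖ ^ p')) t :=
        (lintegral_indicator measurableSet_Ioo _).symm
    _ ≤ ∫⁻ t, (∫⁻ s, k (t - s) * h s) ^ p' := by
        refine lintegral_mono fun t => ?_
        by_cases ht : t ∈ Set.Ioo (0:ℝ) T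
        · rw [Set.indicator_of_mem ht,
            ← ENNReal.ofReal_rpow_of_nonneg (norm_nonneg _) hp'0.le]
          exact ENNReal.rpow_le_rpow (hbound t ht) hp'0.le
        · rw [Set.indicator_of_notMem ht]; exact zero_le
    _ ≤ (∫⁻ u, k u) ^ p' * ∫⁻ s, (h s) ^ p' := young_conv hpq k h hkm hhm
    _ ≤ ENNReal.ofReal ((T + 1) ^ p') *
          ∫⁻ t in Set.Ioo (0:ℝ) T, ENNReal.ofReal (‖g t‖ ^ p') := by
        rw [hH]
        exact mul_le_mul_left hKp _
end
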